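/- Let E be a complete real inner product space and let f : E → ℝ be 1-Lipschitz. Suppose x, y ∈ E with x ≠ y satisfy f(x) - f(y) = ‖x - y‖, and suppose f is differentiable at x. Then there exists t ≥ 0 such that y = x - t • ∇f(x), where ∇f(x) denotes the gradient of f at x; indeed t = ‖x - y‖ works. -/

import Mathlib

open RealInnerProductSpace


/-- Proposition 1 (transportation plan direction, `t ≥ 0` case): if
`f x - f y = ‖x - y‖` for a 1-Lipschitz `f` differentiable at `x`, then `y`
lies in the direction `-∇f(x)` from `x`, at parameter `t = ‖x - y‖ ≥ 0`. -/
theorem otnn_transport_direction_pos {E : Type*} [NormedAddCommGroup E]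
    [InnerProductSpace ℝ E] [CompleteSpace E]
    (f : E → ℝ) (hf : LipschitzWith 1 f) (x y : E) (hne : x ≠ y)
    (hxy : f x - f y = ‖x - y‖) (hdiff : DifferentiableAt ℝ f x) :
    ∃ t : ℝ, 0 ≤ t ∧ t = ‖x - y‖ ∧ y = x - t • gradient f x := by
  set v : E := y - x with hv
  have hv0 : v ≠ 0 := sub_ne_zero.mpr (Ne.symm hne)
  have hnv : ‖x - y‖ = ‖v‖ := by rw [hv, ← neg_sub, norm_neg]
  set g : E := gradient f x with hg
  have hgrad := hdiff.hasGradientAt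
  have hfd : HasFDerivAt f ((InnerProductSpace.toDual ℝ E) g) x := hgrad.hasFDerivAt
  -- f(x + s•v) = f x - s‖v‖ for s ∈ [0,1]
  have hmid : ∀ s ∈ Set.Icc (0:ℝ) 1, f (x + s • v) = f x - s * ‖v‖ := by
    intro s hs
    obtain ⟨hs0, hs1⟩ := hs
    have h1 : f x - f (x + s • v) ≤ s * ‖v‖ := by
      have := hf.dist_le_mul x (x + s • v)
      rw [Real.dist_eq, dist_eq_norm] at this
      have hn : ‖x - (x + s • v)‖ = s * ‖v‖ := by
        rw [show x - (x + s • v) = -(s • v) by abel, norm_neg, norm_smul,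
          Real.norm_eq_abs, abs_of_nonneg hs0]
      calc f x - f (x + s • v) ≤ |f x - f (x + s • v)| := le_abs_self _
        _ ≤ 1 * ‖x - (x + s • v)‖ := this
        _ = s * ‖v‖ := by rw [one_mul, hn]
    have h2 : f (x + s • v) - f y ≤ (1 - s) * ‖v‖ := by
      have := hf.dist_le_mul (x + s • v) y
      rw [Real.dist_eq, dist_eq_norm] at this
      have hn : ‖x + s • v - y‖ = (1 - s) * ‖v‖ := by
        rw [show x + s • v - y = -((1 - s) • v) by rw [hv]; module, norm_neg, norm_smul,
          Real.norm_eq_abs, abs_of_nonneg (by linarith)]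
      calc f (x + s • v) - f y ≤ |f (x + s • v) - f y| := le_abs_self _
        _ ≤ 1 * ‖x + s • v - y‖ := this
        _ = (1 - s) * ‖v‖ := by rw [one_mul, hn]
    have hsum : f x - f y = ‖v‖ := by rw [hxy, hnv]
    linarith
  -- derivative of s ↦ f (x + s • v) at 0 is ⟪g, v⟫
  have hline : HasDerivAt (fun s : ℝ => x + s • v) v 0 := by
    simpa using ((hasDerivAt_id (0:ℝ)).smul_const v).const_add x
  have hcomp : HasDerivAt (fun s : ℝ => f (x + s • v))
      ((InnerProductSpace.toDual ℝ E) g v) 0 := by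
    have hfd' : HasFDerivAt f ((InnerProductSpace.toDual ℝ E) g) (x + (0:ℝ) • v) := by
      simpa using hfd
    exact hfd'.comp_hasDerivAt 0 hline
  have hW1 : HasDerivWithinAt (fun s : ℝ => f (x + s • v))
      ((InnerProductSpace.toDual ℝ E) g v) (Set.Ici 0) 0 := hcomp.hasDerivWithinAt
  have hW2 : HasDerivWithinAt (fun s : ℝ => f (x + s • v)) (-‖v‖) (Set.Ici 0) 0 := by
    have hlin : HasDerivWithinAt (fun s : ℝ => f x - s * ‖v‖) (-‖v‖) (Set.Ici 0) 0 := by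
      have : HasDerivAt (fun s : ℝ => f x - s * ‖v‖) (-‖v‖) 0 := by
        simpa using ((hasDerivAt_id (0:ℝ)).mul_const ‖v‖).const_sub (f x)
      exact this.hasDerivWithinAt
    apply hlin.congr_of_eventuallyEq
    · filter_upwards [Icc_mem_nhdsGE_of_mem (by constructor <;> norm_num :
        (0:ℝ) ∈ Set.Ico 0 1)] with s hs
      exact hmid s ⟨hs.1, hs.2⟩
    · simpa using hmid 0 ⟨le_refl 0, zero_le_one⟩
  have hud : UniqueDiffWithinAt ℝ (Set.Ici (0:ℝ)) 0 :=
    uniqueDiffOn_Ici 0 0 Set.self_mem_Ici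
  have hDv : (InnerProductSpace.toDual ℝ E) g v = -‖v‖ := by
    rw [← hW1.derivWithin hud, hW2.derivWithin hud]
  have hinner : ⟪g, v⟫ = -‖v‖ := by
    rw [← InnerProductSpace.toDual_apply_apply]; exact hDv
  have hgle : ‖g‖ ≤ 1 := by
    have := hfd.le_of_lipschitz hf
    simpa using this
  have hinner' : ⟪-g, v⟫ = ‖v‖ := by rw [inner_neg_left, hinner]; ring
  have hge : 1 ≤ ‖g‖ := by
    have hcs : ⟪-g, v⟫ ≤ ‖-g‖ * ‖v‖ := real_inner_le_norm _ _
    rw [hinner', norm_neg] at hcs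
    have hvpos : 0 < ‖v‖ := norm_pos_iff.2 hv0
    nlinarith
  have hgn : ‖g‖ = 1 := le_antisymm hgle hge
  have heq : ‖v‖ • (-g) = ‖-g‖ • v := by
    apply inner_eq_norm_mul_iff_real.mp
    rw [hinner', norm_neg, hgn, one_mul]
  refine ⟨‖x - y‖, norm_nonneg _, rfl, ?_⟩
  rw [hnv]
  have : ‖v‖ • g = -v := by
    rw [norm_neg, hgn, one_smul] at heq
    have := heq.symm
    rw [smul_neg] at heq
    linear_combination (norm := module) -heq
  rw [this, hv]; abel
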